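/- Let f be holomorphic on the closed disk {|z| ≤ R} with |f(z)| ≤ M there, f(0) = 0, and f'(0) = c > 0. Set r₁ = min{R/2, cR²/(4M)}. Then for every r ≤ r₁, f is injective on the closed disk {|z| ≤ r}, and the image f({|z| ≤ r}) contains the closed disk {|w| ≤ cr/2}. -/

import Mathlib

open Metric

lemma aux_pow_sub (r : ℝ) (z w : ℂ) (hz : ‖z‖ ≤ r) (hw : ‖w‖ ≤ r) (n : ℕ) :
    ‖z ^ n - w ^ n‖ ≤ n * r ^ (n - 1) * ‖z - w‖ := by
  have hr : 0 ≤ r := le_trans (norm_nonneg z) hz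
  calc ‖z ^ n - w ^ n‖
      = ‖(∑ i ∈ Finset.range n, z ^ i * w ^ (n - 1 - i)) * (z - w)‖ := by
        rw [geom_sum₂_mul]
    _ = ‖∑ i ∈ Finset.range n, z ^ i * w ^ (n - 1 - i)‖ * ‖z - w‖ := norm_mul _ _
    _ ≤ (n * r ^ (n - 1)) * ‖z - w‖ := by
        gcongr
        calc ‖∑ i ∈ Finset.range n, z ^ i * w ^ (n - 1 - i)‖
            ≤ ∑ i ∈ Finset.range n, ‖z ^ i * w ^ (n - 1 - i)‖ := norm_sum_le _ _
          _ ≤ ∑ i ∈ Finset.range n, r ^ (n - 1) := by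
              apply Finset.sum_le_sum
              intro i hi
              rw [Finset.mem_range] at hi
              rw [norm_mul, norm_pow, norm_pow]
              calc ‖z‖ ^ i * ‖w‖ ^ (n - 1 - i) ≤ r ^ i * r ^ (n - 1 - i) := by
                    gcongr
                _ = r ^ (n - 1) := by
                    rw [← pow_add]
                    congr 1
                    omega
          _ = n * r ^ (n - 1) := by simp [mul_comm]

lemma aux_cmp {u : ℕ → ℂ} {S : ℂ} {b : ℕ → ℝ} {B : ℝ} (hu : HasSum u S)
    (hb : HasSum b B) (hle : ∀ n, ‖u n‖ ≤ b n) : ‖S‖ ≤ B := by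
  have h1 : Summable fun n => ‖u n‖ :=
    hb.summable.of_nonneg_of_le (fun n => norm_nonneg _) hle
  calc ‖S‖ = ‖∑' n, u n‖ := by rw [hu.tsum_eq]
    _ ≤ ∑' n, ‖u n‖ := norm_tsum_le_tsum_norm h1
    _ ≤ B := by
        rw [← hb.tsum_eq]
        exact Summable.tsum_le_tsum hle h1 hb.summable

theorem stmt_7 (R M c : ℝ) (hR : 0 < R) (hM : 0 < M) (hc : 0 < c)
    (f : ℂ → ℂ) (hf : DifferentiableOn ℂ f (closedBall (0:ℂ) R))
    (hbound : ∀ z ∈ closedBall (0:ℂ) R, ‖f z‖ ≤ M)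
    (hf0 : f 0 = 0) (hf' : deriv f 0 = (c : ℝ)) :
    ∀ r : ℝ, 0 < r → r ≤ min (R / 2) (c * R ^ 2 / (4 * M)) →
      Set.InjOn f (closedBall (0:ℂ) r) ∧
      closedBall (0:ℂ) (c * r / 2) ⊆ f '' closedBall (0:ℂ) r := by
  intro r hr hrle
  have hrcM : r ≤ c * R ^ 2 / (4 * M) := le_trans hrle (min_le_right _ _)
  clear hrle
  lift R to NNReal using hR.le
  have hRp : (0:ℝ) < R := hR
  have hR0 : 0 < R := by exact_mod_cast hR
  have hps : HasFPowerSeriesOnBall f (cauchyPowerSeries f 0 R) 0 R :=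
    hf.hasFPowerSeriesOnBall hR0
  set p := cauchyPowerSeries f 0 R with hp
  -- Cauchy estimates
  have hInt : ∀ n : ℕ, ‖p n‖ ≤ M / (R:ℝ) ^ n := by
    intro n
    have h1 := norm_cauchyPowerSeries_le f 0 (R:ℝ) n
    have hcont : Continuous fun θ : ℝ => ‖f (circleMap 0 R θ)‖ :=
      (hf.continuousOn.comp_continuous (continuous_circleMap 0 R)
        (fun θ => circleMap_mem_closedBall 0 hRp.le θ)).norm
    have hIle : (∫ θ in (0:ℝ)..2*Real.pi, ‖f (circleMap 0 R θ)‖) ≤ 2*Real.pi * M := by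
      have h2 := intervalIntegral.integral_mono_on (μ := MeasureTheory.volume)
        (by positivity : (0:ℝ) ≤ 2*Real.pi)
        (hcont.intervalIntegrable 0 (2*Real.pi)) intervalIntegrable_const
        (fun θ _ => hbound _ (circleMap_mem_closedBall 0 hRp.le θ))
      simpa [mul_comm] using h2
    calc ‖p n‖ ≤ ((2*Real.pi)⁻¹ * ∫ θ in (0:ℝ)..2*Real.pi, ‖f (circleMap 0 R θ)‖)
          * |(R:ℝ)|⁻¹ ^ n := h1
      _ ≤ ((2*Real.pi)⁻¹ * (2*Real.pi*M)) * |(R:ℝ)|⁻¹ ^ n := by gcongr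
      _ = M / (R:ℝ) ^ n := by
          rw [abs_of_pos hRp]
          rw [inv_mul_cancel_left₀ (by positivity : (2*Real.pi) ≠ 0)]
          rw [inv_pow, div_eq_mul_inv]
  have hcoeff : ∀ n, ‖p.coeff n‖ ≤ M / (R:ℝ) ^ n := fun n =>
    le_trans (by simpa using (p n).le_opNorm (fun _ => (1:ℂ))) (hInt n)
  have hder := hps.hasFPowerSeriesAt.deriv
  have hc1 : p.coeff 1 = (c:ℂ) := by
    have h2 : p.coeff 1 = deriv f 0 := hder.symm
    rw [h2, hf']
  have hc0 : p.coeff 0 = 0 := (hps.coeff_zero 1).trans hf0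
  have hcMR : c ≤ M / (R:ℝ) := by
    have h := hcoeff 1
    rw [hc1] at h
    simpa [Complex.norm_real, abs_of_pos hc] using h
  -- basic size facts
  have hKc : M * r / (R:ℝ) ^ 2 ≤ c / 4 := by
    rw [div_le_div_iff₀ (by positivity) (by norm_num)]
    rw [le_div_iff₀ (by positivity)] at hrcM
    nlinarith
  have hrR4 : r / (R:ℝ) ≤ 1/4 := by
    rw [div_le_div_iff₀ hRp (by norm_num)]
    have h2 : c * (R:ℝ) ≤ M := by
      rw [le_div_iff₀ hRp] at hcMR; linarith
    rw [le_div_iff₀ (by positivity)] at hrcM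
    nlinarith [mul_le_mul_of_nonneg_right h2 hRp.le, hrcM, mul_pos hM hRp, hM.le]
  have hrltR : r < (R:ℝ) := by
    have : r ≤ (R:ℝ)/4 := by
      rw [div_le_div_iff₀ hRp (by norm_num)] at hrR4; linarith
    linarith
  -- the power series expansion on the closed ball of radius r
  have hsum : ∀ z ∈ closedBall (0:ℂ) r, HasSum (fun n => z ^ n • p.coeff n) (f z) := by
    intro z hz
    rw [mem_closedBall_zero_iff] at hz
    have hzR : z ∈ Metric.eball (0:ℂ) R := by
      rw [Metric.emetric_ball_nnreal, mem_ball_zero_iff]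
      exact lt_of_le_of_lt hz hrltR
    have h2 := hps.hasSum hzR
    simpa [FormalMultilinearSeries.apply_eq_pow_smul_coeff] using h2
  -- geometric sums
  have hgeo : HasSum (fun n : ℕ => (1/4:ℝ)^n) (4/3) := by
    have h := hasSum_geometric_of_lt_one (by norm_num : (0:ℝ) ≤ 1/4) (by norm_num)
    convert h using 1
    norm_num
  have hngeo : HasSum (fun n : ℕ => (n:ℝ) * (1/4:ℝ)^n) (4/9) := by
    have h := hasSum_coe_mul_geometric_of_norm_lt_one
      (r := (1/4:ℝ)) (by rw [Real.norm_eq_abs, abs_of_nonneg (by norm_num : (0:ℝ) ≤ 1/4)]; norm_num)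
    rw [show (4/9:ℝ) = 1/4/(1-1/4)^2 by norm_num]
    exact h
  -- term bound ingredient
  have hterm : ∀ z w : ℂ, ‖z‖ ≤ r → ‖w‖ ≤ r → ∀ n : ℕ,
      ‖z ^ (n+2) • p.coeff (n+2) - w ^ (n+2) • p.coeff (n+2)‖ ≤
        (c/4*‖z - w‖) * ((n:ℝ)*(1/4)^n + 2*(1/4)^n) := by
    intro z w hz hw n
    rw [← sub_smul, norm_smul]
    have h1 : ‖z ^ (n+2) - w ^ (n+2)‖ ≤ ((n:ℝ)+2) * r ^ (n+1) * ‖z - w‖ := by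
      have := aux_pow_sub r z w hz hw (n+2)
      simpa [Nat.add_sub_cancel] using this
    have hrpos : (0:ℝ) ≤ r := hr.le
    calc ‖z ^ (n+2) - w ^ (n+2)‖ * ‖p.coeff (n+2)‖
        ≤ (((n:ℝ)+2) * r ^ (n+1) * ‖z - w‖) * (M / (R:ℝ) ^ (n+2)) :=
          mul_le_mul h1 (hcoeff (n+2)) (norm_nonneg _) (by positivity)
      _ = ‖z - w‖ * (((n:ℝ)+2) * ((M * r / (R:ℝ)^2) * (r/(R:ℝ))^n)) := by
          have hRn : (R:ℝ) ^ n * (R:ℝ)⁻¹ ^ n = 1 := by rw [← mul_pow, mul_inv_cancel₀ hRp.ne', one_pow]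
          field_simp
          linear_combination (-(r * r ^ n * ‖z - w‖ * (R:ℝ) ^ 2)) * hRn
      _ ≤ ‖z - w‖ * (((n:ℝ)+2) * ((c/4) * (1/4:ℝ)^n)) := by
          gcongr
      _ = (c/4*‖z - w‖) * ((n:ℝ)*(1/4)^n + 2*(1/4)^n) := by ring
  -- key Lipschitz bound for h(z) = f z - c z
  have key : ∀ z ∈ closedBall (0:ℂ) r, ∀ w ∈ closedBall (0:ℂ) r,
      ‖(f z - (c:ℂ) * z) - (f w - (c:ℂ) * w)‖ ≤ 7/9 * c * ‖z - w‖ := by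
    intro z hz w hw
    have hz' : ‖z‖ ≤ r := by rwa [mem_closedBall_zero_iff] at hz
    have hw' : ‖w‖ ≤ r := by rwa [mem_closedBall_zero_iff] at hw
    have hd := (hsum z hz).sub (hsum w hw)
    have h2 := (hasSum_nat_add_iff' 2).mpr hd
    have hS2 : (∑ i ∈ Finset.range 2, (z ^ i • p.coeff i - w ^ i • p.coeff i))
        = (c:ℂ)*z - (c:ℂ)*w := by
      simp [Finset.sum_range_succ, hc0, hc1, smul_eq_mul]
      ring
    rw [hS2] at h2
    have hB : HasSum (fun n : ℕ => (c/4*‖z - w‖) * ((n:ℝ)*(1/4)^n + 2*(1/4)^n))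
        ((c/4*‖z - w‖) * (4/9 + 2*(4/3))) :=
      (hngeo.add (hgeo.mul_left 2)).mul_left _
    have hbnd := aux_cmp h2 hB (hterm z w hz' hw')
    have he : (f z - (c:ℂ) * z) - (f w - (c:ℂ) * w)
        = f z - f w - ((c:ℂ)*z - (c:ℂ)*w) := by ring
    rw [he]
    calc ‖f z - f w - ((c:ℂ)*z - (c:ℂ)*w)‖
        ≤ (c/4*‖z - w‖) * (4/9 + 2*(4/3)) := hbnd
      _ = 7/9 * c * ‖z - w‖ := by ring
  -- pointwise bound
  have hpt : ∀ z ∈ closedBall (0:ℂ) r, ‖f z - (c:ℂ) * z‖ ≤ c * r / 3 := by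
    intro z hz
    have hz' : ‖z‖ ≤ r := by rwa [mem_closedBall_zero_iff] at hz
    have hd := hsum z hz
    have h2 := (hasSum_nat_add_iff' 2).mpr hd
    have hS2 : (∑ i ∈ Finset.range 2, z ^ i • p.coeff i) = (c:ℂ)*z := by
      simp [Finset.sum_range_succ, hc0, hc1, smul_eq_mul]
      ring
    rw [hS2] at h2
    have hB : HasSum (fun n : ℕ => (c*r/4) * (1/4:ℝ)^n) ((c*r/4) * (4/3)) :=
      hgeo.mul_left _
    have hterm2 : ∀ n : ℕ, ‖z ^ (n+2) • p.coeff (n+2)‖ ≤ (c*r/4) * (1/4:ℝ)^n := by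
      intro n
      rw [norm_smul, norm_pow]
      calc ‖z‖ ^ (n+2) * ‖p.coeff (n+2)‖ ≤ r ^ (n+2) * (M / (R:ℝ)^(n+2)) := by
            gcongr
            exact hcoeff (n+2)
        _ = (M * r / (R:ℝ)^2) * r * (r/(R:ℝ))^n := by
            have hRn : (R:ℝ) ^ n * (R:ℝ)⁻¹ ^ n = 1 := by rw [← mul_pow, mul_inv_cancel₀ hRp.ne', one_pow]
            field_simp
            linear_combination (-(r ^ 2 * r ^ n * (R:ℝ) ^ 2)) * hRn
        _ ≤ (c/4) * r * (1/4:ℝ)^n := by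
            gcongr
        _ = (c*r/4) * (1/4:ℝ)^n := by ring
    have hbnd := aux_cmp h2 hB hterm2
    calc ‖f z - (c:ℂ)*z‖ ≤ (c*r/4) * (4/3) := hbnd
      _ = c * r / 3 := by ring
  have hcn : ‖(c:ℂ)‖ = c := by
    simp [Complex.norm_real, Real.norm_eq_abs, abs_of_pos hc]
  constructor
  · -- injectivity
    intro z hz w hw hfzw
    have hk := key z hz w hw
    rw [hfzw] at hk
    have he : f w - (c:ℂ)*z - (f w - (c:ℂ)*w) = (c:ℂ) * (w - z) := by ring
    rw [he, norm_mul, hcn, norm_sub_rev] at hk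
    have h0 : ‖z - w‖ ≤ 0 := by nlinarith [norm_nonneg (z - w)]
    have h0' : ‖z - w‖ = 0 := le_antisymm h0 (norm_nonneg _)
    exact sub_eq_zero.mp (norm_eq_zero.mp h0')
  · -- surjectivity
    intro w hw
    rw [mem_closedBall_zero_iff] at hw
    set φ : ℂ → ℂ := fun z => z + (w - f z)/(c:ℂ) with hφ
    have hcne : (c:ℂ) ≠ 0 := by exact_mod_cast hc.ne'
    have hmaps : Set.MapsTo φ (closedBall (0:ℂ) r) (closedBall (0:ℂ) r) := by
      intro z hz
      rw [mem_closedBall_zero_iff]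
      have h1 : φ z = (w - (f z - (c:ℂ)*z))/(c:ℂ) := by
        rw [hφ]
        field_simp
        ring
      rw [h1, norm_div, hcn]
      have h2 : ‖w - (f z - (c:ℂ)*z)‖ ≤ c*r/2 + c*r/3 :=
        le_trans (norm_sub_le _ _) (add_le_add hw (hpt z hz))
      rw [div_le_iff₀ hc]
      nlinarith
    have hlip : LipschitzOnWith (7/9 : NNReal) φ (closedBall (0:ℂ) r) := by
      apply LipschitzOnWith.of_dist_le_mul
      intro x hx y hy
      rw [dist_eq_norm, dist_eq_norm]
      have h1 : φ x - φ y = -(((f x - (c:ℂ)*x) - (f y - (c:ℂ)*y))/(c:ℂ)) := by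
        rw [hφ]
        field_simp
        ring
      rw [h1, norm_neg, norm_div, hcn]
      have hk := key x hx y hy
      have hco : ((7/9 : NNReal) : ℝ) = 7/9 := by
        rw [NNReal.coe_div]; norm_num
      rw [hco, div_le_iff₀ hc]
      calc ‖(f x - (c:ℂ)*x) - (f y - (c:ℂ)*y)‖ ≤ 7/9 * c * ‖x - y‖ := hk
        _ = 7/9 * ‖x - y‖ * c := by ring
    have hsc : IsComplete (closedBall (0:ℂ) r) := isClosed_closedBall.isComplete
    have hcontr : ContractingWith (7/9 : NNReal) (hmaps.restrict φ _ _) := by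
      constructor
      · rw [← NNReal.coe_lt_coe, NNReal.coe_div]
        norm_num
      · exact hlip.to_restrict
    have h0mem : (0:ℂ) ∈ closedBall (0:ℂ) r := mem_closedBall_self hr.le
    set x := ContractingWith.efixedPoint' φ hsc hmaps hcontr 0 h0mem (edist_ne_top _ _) with hx
    have hxmem : x ∈ closedBall (0:ℂ) r :=
      ContractingWith.efixedPoint_mem' hsc hmaps hcontr h0mem (edist_ne_top _ _)
    have hxfix : φ x = x :=
      ContractingWith.efixedPoint_isFixedPt' hsc hmaps hcontr h0mem (edist_ne_top _ _)
    refine ⟨x, hxmem, ?_⟩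
    have : (w - f x)/(c:ℂ) = 0 := by
      have := hxfix
      rw [hφ] at this
      simpa using this
    rw [div_eq_zero_iff] at this
    rcases this with h | h
    · exact (sub_eq_zero.mp h).symm
    · exact absurd h hcne
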